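/- Let G be a group, 𝔤 = (g_1,…,g_n) a finite string of elements of G, and ℰ = {E_1,…,E_m} a finite partition of G. If some subsystem of the system of configuration equations Eq(𝔤,ℰ) is normal, then G is not amenable (there is no finitely additive, left-invariant probability measure on all subsets of G) and G admits a paradoxical decomposition. -/
import Mathlib


namespace PaperStmt

/-- A (0,1)-matrix: every entry is 0 or 1. -/
def ZeroOneMat {α β : Type*} (M : Matrix α β ℝ) : Prop := ∀ i j, M i j = 0 ∨ M i j = 1

/-- The lower-triangular matrix `T` with all entries on and below the diagonal equal to 1. -/
def Tmat (n : ℕ) : Matrix (Fin n) (Fin n) ℝ := fun i j => if j ≤ i then 1 else 0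

/-- The permutation matrix associated to a permutation `σ` (row `i` is `e_{σ i}`). -/
def permMat {n : ℕ} (σ : Equiv.Perm (Fin n)) : Matrix (Fin n) (Fin n) ℝ :=
  fun i j => if σ i = j then 1 else 0

/-- Cyclic successor on `Fin n`. -/
def cycSucc {n : ℕ} (i : Fin n) : Fin n := ⟨(i.val + 1) % n, Nat.mod_lt _ i.pos⟩

/-- `M⁺`: the matrix `M` with its rows cyclically shifted up by one. -/
def shiftRows {n : ℕ} {ι : Type*} (M : Matrix (Fin n) ι ℝ) : Matrix (Fin n) ι ℝ :=
  fun i j => M (cycSucc i) j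

/-- The system `(B - A) X = 0` is *normal* if there is a permutation matrix `P` such that
every entry of `T P (B - A) - P⁺ A` is an integer `≥ -1`. -/
def IsNormal {n : ℕ} {ι : Type*} (A B : Matrix (Fin n) ι ℝ) : Prop :=
  ∃ σ : Equiv.Perm (Fin n), ∀ (i : Fin n) (j : ι),
    ∃ z : ℤ,
      (Tmat n * (permMat σ * (B - A)) - shiftRows (permMat σ) * A) i j = (z : ℝ) ∧ -1 ≤ z

end PaperStmt

open Pointwise

namespace PaperStmt

/-- A group admits a paradoxical decomposition: there are pairwise disjoint subsets
`A 1, …, A p, B 1, …, B q` and group elements `s i`, `t j` such that the translates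
`s i • A i` partition `G` and the translates `t j • B j` partition `G`. -/
def IsParadoxical (G : Type*) [Group G] : Prop :=
  ∃ (p q : ℕ), 0 < p ∧ 0 < q ∧
    ∃ (A : Fin p → Set G) (B : Fin q → Set G) (s : Fin p → G) (t : Fin q → G),
      (∀ i i', i ≠ i' → Disjoint (A i) (A i')) ∧
      (∀ j j', j ≠ j' → Disjoint (B j) (B j')) ∧
      (∀ i j, Disjoint (A i) (B j)) ∧
      (⋃ i, s i • A i) = Set.univ ∧
      (∀ i i', i ≠ i' → Disjoint (s i • A i) (s i' • A i')) ∧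
      (⋃ j, t j • B j) = Set.univ ∧
      (∀ j j', j ≠ j' → Disjoint (t j • B j) (t j' • B j'))

/-- A finitely additive, left-invariant probability measure defined on all subsets of `G`
(the defining property of amenability for a discrete group). -/
def HasLeftInvariantMean (G : Type*) [Group G] : Prop :=
  ∃ μ : Set G → ℝ,
    (∀ A : Set G, 0 ≤ μ A ∧ μ A ≤ 1) ∧
    μ Set.univ = 1 ∧
    (∀ A B : Set G, Disjoint A B → μ (A ∪ B) = μ A + μ B) ∧
    (∀ (g : G) (A : Set G), μ (g • A) = μ A)

/-- A *complete* paradoxical decomposition with `p + q` pieces: the pieces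
`A 1, …, A p, B 1, …, B q` form a partition of `G`, and the translates
`s i • A i` and `t j • B j` each form a partition of `G`. -/
def IsCompleteParadox (G : Type*) [Group G] (p q : ℕ) : Prop :=
  ∃ (A : Fin p → Set G) (B : Fin q → Set G) (s : Fin p → G) (t : Fin q → G),
    (∀ i i', i ≠ i' → Disjoint (A i) (A i')) ∧
    (∀ j j', j ≠ j' → Disjoint (B j) (B j')) ∧
    (∀ i j, Disjoint (A i) (B j)) ∧
    ((⋃ i, A i) ∪ (⋃ j, B j)) = Set.univ ∧
    (⋃ i, s i • A i) = Set.univ ∧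
    (∀ i i', i ≠ i' → Disjoint (s i • A i) (s i' • A i')) ∧
    (⋃ j, t j • B j) = Set.univ ∧
    (∀ j j', j ≠ j' → Disjoint (t j • B j) (t j' • B j'))

/-- The Tarski number of a group: the least total number of pieces `p + q` over all
complete paradoxical decompositions of `G`, and `∞` if there is none. -/
noncomputable def tarskiNumber (G : Type*) [Group G] : ℕ∞ :=
  sInf {N : ℕ∞ | ∃ p q : ℕ, N = ((p + q : ℕ) : ℕ∞) ∧ IsCompleteParadox G p q}

end PaperStmt

open Pointwise

namespace PaperStmt

/-- `E : Fin m → Set G` is a partition of `G`: pairwise disjoint with union all of `G`. -/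
def IsPartition {G : Type*} {m : ℕ} (E : Fin m → Set G) : Prop :=
  (∀ i j, i ≠ j → Disjoint (E i) (E j)) ∧ (⋃ i, E i) = Set.univ

/-- `C = (c_0, …, c_n)` is a configuration for the pair `(g, E)`: there is `x ∈ E (c 0)`
with `g i * x ∈ E (c i)` for `1 ≤ i ≤ n`. -/
def IsConfig {G : Type*} [Group G] {n m : ℕ} (g : Fin n → G) (E : Fin m → Set G)
    (C : Fin (n + 1) → Fin m) : Prop :=
  ∃ x : G, x ∈ E (C 0) ∧ ∀ i : Fin n, g i * x ∈ E (C i.succ)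

/-- `x_0(C) = E_{c_0} ∩ ⋂_{j=1}^n g_j⁻¹ E_{c_j}`. -/
def xzero {G : Type*} [Group G] {n m : ℕ} (g : Fin n → G) (E : Fin m → Set G)
    (C : Fin (n + 1) → Fin m) : Set G :=
  E (C 0) ∩ ⋂ i : Fin n, (g i)⁻¹ • E (C i.succ)

/-- The string `(g_0, g_1, …, g_n)` with `g_0 = e`. -/
def ghat {G : Type*} [Group G] {n : ℕ} (g : Fin n → G) : Fin (n + 1) → G := Fin.cons 1 g

/-- `x_j(C) = g_j • x_0(C)` for `0 ≤ j ≤ n` (with `g_0 = e`). -/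
def xj {G : Type*} [Group G] {n m : ℕ} (g : Fin n → G) (E : Fin m → Set G)
    (C : Fin (n + 1) → Fin m) (j : Fin (n + 1)) : Set G :=
  ghat g j • xzero g E C

/-- The real-valued indicator of a proposition. -/
noncomputable def ind (P : Prop) : ℝ :=
  letI := Classical.propDecidable P; if P then 1 else 0

/-- `f` is a solution of the system of configuration equations `Eq(g, E)`:
for all `1 ≤ i ≤ m` and `0 ≤ j, k ≤ n`,
`∑_{C : x_j(C) ⊆ E_i} f C = ∑_{C : x_k(C) ⊆ E_i} f C`. -/
def IsEqSolution {G : Type*} [Group G] {n m : ℕ} (g : Fin n → G) (E : Fin m → Set G)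
    (f : {C : Fin (n + 1) → Fin m // IsConfig g E C} → ℝ) : Prop :=
  ∀ (i : Fin m) (j k : Fin (n + 1)),
    ∑ᶠ C ∈ {C : {C : Fin (n + 1) → Fin m // IsConfig g E C} | xj g E C.1 j ⊆ E i}, f C =
    ∑ᶠ C ∈ {C : {C : Fin (n + 1) → Fin m // IsConfig g E C} | xj g E C.1 k ⊆ E i}, f C

end PaperStmt

namespace PaperStmt

/-! ### Auxiliary machinery: equidecomposability by finitely many left translations -/

section EquiAux

variable {G : Type*} [Group G]

/-- Equidecomposability of two subsets of `G` via finitely many left translations. -/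
def Equi (S T : Set G) : Prop :=
  ∃ (ι : Type) (_ : Finite ι) (F : ι → Set G) (h : ι → G),
    (∀ i j, i ≠ j → Disjoint (F i) (F j)) ∧ (⋃ i, F i) = S ∧
    (∀ i j, i ≠ j → Disjoint (h i • F i) (h j • F j)) ∧ (⋃ i, h i • F i) = T

lemma disjoint_smul_set {g : G} {A B : Set G} (h : Disjoint A B) :
    Disjoint (g • A) (g • B) := by
  simpa [Set.disjoint_iff_inter_eq_empty, ← Set.smul_set_inter] using h

lemma equi_refl (S : Set G) : Equi S S :=
  ⟨PUnit, inferInstance, fun _ => S, fun _ => 1,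
    fun i j hij => absurd (Subsingleton.elim i j) hij, Set.iUnion_const S,
    fun i j hij => absurd (Subsingleton.elim i j) hij, by
      rw [show (fun i : PUnit => (1 : G) • S) = fun _ : PUnit => S from funext fun _ => one_smul _ _]
      exact Set.iUnion_const S⟩

lemma equi_smul_left (g : G) (S : Set G) : Equi (g • S) S :=
  ⟨PUnit, inferInstance, fun _ => g • S, fun _ => g⁻¹,
    fun i j hij => absurd (Subsingleton.elim i j) hij, Set.iUnion_const _,
    fun i j hij => absurd (Subsingleton.elim i j) hij, by
      rw [show (fun _ : PUnit => g⁻¹ • g • S) = fun _ : PUnit => S from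
        funext fun _ => inv_smul_smul g S]
      exact Set.iUnion_const S⟩

lemma equi_smul_right (g : G) (S : Set G) : Equi S (g • S) :=
  ⟨PUnit, inferInstance, fun _ => S, fun _ => g,
    fun i j hij => absurd (Subsingleton.elim i j) hij, Set.iUnion_const _,
    fun i j hij => absurd (Subsingleton.elim i j) hij, Set.iUnion_const _⟩

lemma equi_trans {S T U : Set G} (h1 : Equi S T) (h2 : Equi T U) : Equi S U := by
  obtain ⟨ι, _, F, h, dF, uF, dT, uT⟩ := h1
  obtain ⟨κ, _, F', h', dF', uF', dT', uT'⟩ := h2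
  refine ⟨ι × κ, inferInstance, fun x => F x.1 ∩ (h x.1)⁻¹ • F' x.2,
    fun x => h' x.2 * h x.1, ?_, ?_, ?_, ?_⟩
  · rintro ⟨i, j⟩ ⟨i2, j2⟩ hne
    rw [Set.disjoint_left]
    rintro x ⟨hx1, hx2⟩ ⟨hy1, hy2⟩
    rw [Set.mem_inv_smul_set_iff] at hx2 hy2
    by_cases hi : i = i2
    · subst hi
      have hj : j ≠ j2 := fun hj => hne (by rw [hj])
      exact Set.disjoint_left.mp (dF' _ _ hj) hx2 hy2
    · exact Set.disjoint_left.mp (dF _ _ hi) hx1 hy1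
  · ext x
    simp only [Set.mem_iUnion, Set.mem_inter_iff, Set.mem_inv_smul_set_iff]
    constructor
    · rintro ⟨⟨i, j⟩, hx, -⟩
      rw [← uF]
      exact Set.mem_iUnion.mpr ⟨i, hx⟩
    · intro hx
      rw [← uF, Set.mem_iUnion] at hx
      obtain ⟨i, hi⟩ := hx
      have hxT : h i • x ∈ T := by
        rw [← uT]
        exact Set.mem_iUnion.mpr ⟨i, Set.smul_mem_smul_set hi⟩
      rw [← uF', Set.mem_iUnion] at hxT
      obtain ⟨j, hj⟩ := hxT
      exact ⟨⟨i, j⟩, hi, hj⟩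
  · rintro ⟨i, j⟩ ⟨i2, j2⟩ hne
    rw [Set.disjoint_left]
    rintro y hy hy2
    obtain ⟨x, ⟨hxF, hxF'⟩, rfl⟩ := Set.mem_smul_set.mp hy
    obtain ⟨x2, ⟨hx2F, hx2F'⟩, heq⟩ := Set.mem_smul_set.mp hy2
    rw [Set.mem_inv_smul_set_iff] at hxF' hx2F'
    by_cases hj : j = j2
    · subst hj
      have hi : i ≠ i2 := fun hi => hne (by rw [hi])
      have heq' : h i2 • x2 = h i • x := by
        rw [mul_smul, mul_smul] at heq
        exact smul_left_cancel _ heq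
      have m1 : h i • x ∈ h i • F i := Set.smul_mem_smul_set hxF
      have m2 : h i • x ∈ h i2 • F i2 := heq' ▸ Set.smul_mem_smul_set hx2F
      exact Set.disjoint_left.mp (dT _ _ hi) m1 m2
    · have m1 : (h' j * h i) • x ∈ h' j • F' j := by
        rw [mul_smul]; exact Set.smul_mem_smul_set hxF'
      have m2 : (h' j * h i) • x ∈ h' j2 • F' j2 := by
        rw [← heq, mul_smul]; exact Set.smul_mem_smul_set hx2F'
      exact Set.disjoint_left.mp (dT' _ _ hj) m1 m2
  · ext y
    constructor
    · intro hy
      rw [Set.mem_iUnion] at hy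
      obtain ⟨⟨i, j⟩, hy⟩ := hy
      obtain ⟨x, ⟨hxF, hxF'⟩, rfl⟩ := Set.mem_smul_set.mp hy
      rw [Set.mem_inv_smul_set_iff] at hxF'
      rw [← uT', Set.mem_iUnion]
      exact ⟨j, by rw [mul_smul]; exact Set.smul_mem_smul_set hxF'⟩
    · intro hy
      rw [← uT', Set.mem_iUnion] at hy
      obtain ⟨j, hy⟩ := hy
      obtain ⟨w, hwF', rfl⟩ := Set.mem_smul_set.mp hy
      have hwT : w ∈ T := by rw [← uF']; exact Set.mem_iUnion.mpr ⟨j, hwF'⟩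
      rw [← uT, Set.mem_iUnion] at hwT
      obtain ⟨i, hw⟩ := hwT
      obtain ⟨x, hxF, rfl⟩ := Set.mem_smul_set.mp hw
      rw [Set.mem_iUnion]
      refine ⟨⟨i, j⟩, ?_⟩
      have hmem : ((h' j * h i) • x) ∈ (h' j * h i) • (F i ∩ (h i)⁻¹ • F' j) :=
        Set.smul_mem_smul_set ⟨hxF, by rw [Set.mem_inv_smul_set_iff]; exact hwF'⟩
      simpa [mul_smul, mul_assoc] using hmem

lemma equi_partition {S T : Set G} (hST : Equi S T) {κ : Type} [Finite κ]
    (Sp : κ → Set G) (hdisj : ∀ a b, a ≠ b → Disjoint (Sp a) (Sp b))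
    (hunion : (⋃ a, Sp a) = S) :
    ∃ Tp : κ → Set G, (∀ a b, a ≠ b → Disjoint (Tp a) (Tp b)) ∧
      (⋃ a, Tp a) = T ∧ ∀ a, Equi (Sp a) (Tp a) := by
  obtain ⟨ι, _, F, h, dF, uF, dT, uT⟩ := hST
  refine ⟨fun a => ⋃ i, h i • (F i ∩ Sp a), ?_, ?_, ?_⟩
  · intro a b hab
    rw [Set.disjoint_iUnion_left]
    intro i
    rw [Set.disjoint_iUnion_right]
    intro i2
    by_cases hi : i = i2
    · subst hi
      exact disjoint_smul_set
        ((hdisj a b hab).mono Set.inter_subset_right Set.inter_subset_right)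
    · exact (dT i i2 hi).mono (Set.smul_set_mono Set.inter_subset_left)
        (Set.smul_set_mono Set.inter_subset_left)
  · ext y
    simp only [Set.mem_iUnion]
    constructor
    · rintro ⟨a, i, hy⟩
      obtain ⟨x, ⟨hxF, -⟩, rfl⟩ := Set.mem_smul_set.mp hy
      rw [← uT]
      exact Set.mem_iUnion.mpr ⟨i, Set.smul_mem_smul_set hxF⟩
    · intro hy
      rw [← uT, Set.mem_iUnion] at hy
      obtain ⟨i, hy⟩ := hy
      obtain ⟨x, hxF, rfl⟩ := Set.mem_smul_set.mp hy
      have hxS : x ∈ S := by rw [← uF]; exact Set.mem_iUnion.mpr ⟨i, hxF⟩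
      rw [← hunion, Set.mem_iUnion] at hxS
      obtain ⟨a, ha⟩ := hxS
      exact ⟨a, i, Set.smul_mem_smul_set ⟨hxF, ha⟩⟩
  · intro a
    refine ⟨ι, inferInstance, fun i => F i ∩ Sp a, h, ?_, ?_, ?_, rfl⟩
    · intro i j hij
      exact (dF i j hij).mono Set.inter_subset_left Set.inter_subset_left
    · have hSpa : Sp a ⊆ S := hunion ▸ Set.subset_iUnion Sp a
      ext x
      simp only [Set.mem_iUnion, Set.mem_inter_iff]
      constructor
      · rintro ⟨i, -, hx⟩
        exact hx
      · intro hx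
        have hxS : x ∈ ⋃ i, F i := by rw [uF]; exact hSpa hx
        obtain ⟨i, hi⟩ := Set.mem_iUnion.mp hxS
        exact ⟨i, hi, hx⟩
    · intro i j hij
      exact (dT i j hij).mono (Set.smul_set_mono Set.inter_subset_left)
        (Set.smul_set_mono Set.inter_subset_left)

lemma equi_glue {κ : Type} [Finite κ] (Sp Tp : κ → Set G)
    (hS : ∀ a b, a ≠ b → Disjoint (Sp a) (Sp b))
    (hT : ∀ a b, a ≠ b → Disjoint (Tp a) (Tp b))
    (he : ∀ a, Equi (Sp a) (Tp a)) : Equi (⋃ a, Sp a) (⋃ a, Tp a) := by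
  choose ι inst F h dF uF dT uT using he
  haveI := inst
  refine ⟨Σ a, ι a, inferInstance, fun x => F x.1 x.2, fun x => h x.1 x.2, ?_, ?_, ?_, ?_⟩
  · rintro ⟨a, i⟩ ⟨b, j⟩ hne
    by_cases hab : a = b
    · subst hab
      have hij : i ≠ j := fun hij => hne (by rw [hij])
      exact dF a i j hij
    · exact (hS a b hab).mono
        (by rw [← uF a]; exact Set.subset_iUnion (fun i2 => F a i2) i)
        (by rw [← uF b]; exact Set.subset_iUnion (fun j2 => F b j2) j)
  · rw [Set.iUnion_sigma]
    exact Set.iUnion_congr uF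
  · rintro ⟨a, i⟩ ⟨b, j⟩ hne
    by_cases hab : a = b
    · subst hab
      have hij : i ≠ j := fun hij => hne (by rw [hij])
      exact dT a i j hij
    · exact (hT a b hab).mono
        (by rw [← uT a]; exact Set.subset_iUnion (fun i2 => h a i2 • F a i2) i)
        (by rw [← uT b]; exact Set.subset_iUnion (fun j2 => h b j2 • F b j2) j)
  · rw [Set.iUnion_sigma]
    exact Set.iUnion_congr uT

lemma isParadoxical_of_equi {A B : Set G} (hA : Equi Set.univ A) (hB : Equi Set.univ B)
    (hAB : Disjoint A B) : IsParadoxical G := by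
  obtain ⟨ι, _, F, h, dF, uF, dT, uT⟩ := hA
  obtain ⟨κ, _, F', h', dF', uF', dT', uT'⟩ := hB
  haveI hι : Nonempty ι := by
    have h1 : (1 : G) ∈ ⋃ i, F i := by rw [uF]; trivial
    obtain ⟨i, -⟩ := Set.mem_iUnion.mp h1
    exact ⟨i⟩
  haveI hκ : Nonempty κ := by
    have h1 : (1 : G) ∈ ⋃ i, F' i := by rw [uF']; trivial
    obtain ⟨i, -⟩ := Set.mem_iUnion.mp h1
    exact ⟨i⟩
  let e := (Finite.equivFin ι).symm
  let e' := (Finite.equivFin κ).symm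
  refine ⟨Nat.card ι, Nat.card κ, Nat.card_pos, Nat.card_pos,
    fun i => h (e i) • F (e i), fun j => h' (e' j) • F' (e' j),
    fun i => (h (e i))⁻¹, fun j => (h' (e' j))⁻¹, ?_, ?_, ?_, ?_, ?_, ?_, ?_⟩
  · intro i i' hne
    exact dT _ _ (e.injective.ne hne)
  · intro j j' hne
    exact dT' _ _ (e'.injective.ne hne)
  · intro i j
    have h1 : h (e i) • F (e i) ⊆ A := by
      rw [← uT]; exact Set.subset_iUnion (fun r => h r • F r) (e i)
    have h2 : h' (e' j) • F' (e' j) ⊆ B := by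
      rw [← uT']; exact Set.subset_iUnion (fun r => h' r • F' r) (e' j)
    exact hAB.mono h1 h2
  · have h1 : ∀ i, (h (e i))⁻¹ • (h (e i) • F (e i)) = F (e i) := fun i => inv_smul_smul _ _
    rw [Set.iUnion_congr h1, e.surjective.iUnion_comp F, uF]
  · intro i i' hne
    rw [inv_smul_smul, inv_smul_smul]
    exact dF _ _ (e.injective.ne hne)
  · have h1 : ∀ j, (h' (e' j))⁻¹ • (h' (e' j) • F' (e' j)) = F' (e' j) :=
      fun j => inv_smul_smul _ _
    rw [Set.iUnion_congr h1, e'.surjective.iUnion_comp F', uF']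
  · intro j j' hne
    rw [inv_smul_smul, inv_smul_smul]
    exact dF' _ _ (e'.injective.ne hne)

lemma finadd (μ : Set G → ℝ)
    (hadd : ∀ A B : Set G, Disjoint A B → μ (A ∪ B) = μ A + μ B) :
    ∀ (k : ℕ) (S : Fin k → Set G), (∀ i j, i ≠ j → Disjoint (S i) (S j)) →
      μ (⋃ i, S i) = ∑ i, μ (S i) := by
  have hemp : μ ∅ = 0 := by
    have h1 := hadd ∅ ∅ disjoint_bot_left
    simp only [Set.union_empty] at h1
    linarith
  intro k
  induction k with
  | zero =>
    intro S _
    simp [hemp]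
  | succ k ih =>
    intro S hS
    have hU : (⋃ i, S i) = S 0 ∪ ⋃ i : Fin k, S i.succ := by
      ext x
      simp only [Set.mem_iUnion, Set.mem_union]
      constructor
      · rintro ⟨i, hi⟩
        rcases Fin.eq_zero_or_eq_succ i with h0 | ⟨j, rfl⟩
        · subst h0; exact Or.inl hi
        · exact Or.inr ⟨j, hi⟩
      · rintro (h0 | ⟨j, hj⟩)
        exacts [⟨0, h0⟩, ⟨j.succ, hj⟩]
    have hd : Disjoint (S 0) (⋃ i : Fin k, S i.succ) := by
      rw [Set.disjoint_iUnion_right]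
      exact fun i => hS 0 i.succ (Fin.succ_ne_zero i).symm
    rw [hU, hadd _ _ hd,
      ih _ (fun i j hij => hS i.succ j.succ (fun hh => hij (Fin.succ_injective _ hh))),
      Fin.sum_univ_succ]

lemma not_mean_of_paradoxical (hpar : IsParadoxical G) :
    ¬ HasLeftInvariantMean G := by
  rintro ⟨μ, hbd, huniv, hadd, hinv⟩
  obtain ⟨p, q, -, -, A, B, s, t, hA, hB, hAB, hsA, hsAd, htB, htBd⟩ := hpar
  have madd := finadd μ hadd
  have hA1 : μ (⋃ i, A i) = 1 := by
    rw [madd _ A hA]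
    have h1 : ∑ i, μ (A i) = ∑ i, μ (s i • A i) :=
      Finset.sum_congr rfl fun i _ => (hinv (s i) (A i)).symm
    rw [h1, ← madd _ _ hsAd, hsA, huniv]
  have hB1 : μ (⋃ j, B j) = 1 := by
    rw [madd _ B hB]
    have h1 : ∑ j, μ (B j) = ∑ j, μ (t j • B j) :=
      Finset.sum_congr rfl fun j _ => (hinv (t j) (B j)).symm
    rw [h1, ← madd _ _ htBd, htB, huniv]
  have hd : Disjoint (⋃ i, A i) (⋃ j, B j) := by
    rw [Set.disjoint_iUnion_left]
    intro i
    rw [Set.disjoint_iUnion_right]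
    intro j
    exact hAB i j
  have h2 : μ ((⋃ i, A i) ∪ ⋃ j, B j) = 2 := by
    rw [hadd _ _ hd, hA1, hB1]
    norm_num
  have h3 := (hbd ((⋃ i, A i) ∪ ⋃ j, B j)).2
  linarith

end EquiAux

/-! ### Auxiliary lemmas about configurations -/

section ConfigAux

variable {G : Type*} [Group G] {n m : ℕ} {g : Fin n → G} {E : Fin m → Set G}

lemma mem_xzero_iff {C : Fin (n + 1) → Fin m} {x : G} :
    x ∈ xzero g E C ↔ x ∈ E (C 0) ∧ ∀ i : Fin n, g i * x ∈ E (C i.succ) := by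
  simp [xzero, Set.mem_iInter, Set.mem_inv_smul_set_iff, smul_eq_mul]

lemma eqIdx (hE : IsPartition E) {x : G} {i j : Fin m} (hi : x ∈ E i) (hj : x ∈ E j) :
    i = j := by
  by_contra hne
  exact Set.disjoint_left.mp (hE.1 i j hne) hi hj

lemma xzero_disjoint (hE : IsPartition E) {C C' : Fin (n + 1) → Fin m} (hne : C ≠ C') :
    Disjoint (xzero g E C) (xzero g E C') := by
  rw [Set.disjoint_left]
  intro x hx hx'
  rw [mem_xzero_iff] at hx hx'
  apply hne
  funext j
  induction j using Fin.cases with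
  | zero => exact eqIdx hE hx.1 hx'.1
  | succ i => exact eqIdx hE (hx.2 i) (hx'.2 i)

lemma exists_xzero_mem (hE : IsPartition E) (x : G) :
    ∃ C : Fin (n + 1) → Fin m, IsConfig g E C ∧ x ∈ xzero g E C := by
  have hidx : ∀ y : G, ∃ i, y ∈ E i := by
    intro y
    have h1 : y ∈ ⋃ i, E i := by rw [hE.2]; trivial
    exact Set.mem_iUnion.mp h1
  choose idx hidx using hidx
  refine ⟨Fin.cases (idx x) (fun i => idx (g i * x)), ⟨x, ?_, ?_⟩, ?_⟩
  · simpa using hidx x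
  · intro i; simpa using hidx (g i * x)
  · rw [mem_xzero_iff]
    exact ⟨by simpa using hidx x, fun i => by simpa using hidx (g i * x)⟩

lemma smul_xzero_subset {C : Fin (n + 1) → Fin m} (j : Fin (n + 1)) :
    ghat g j • xzero g E C ⊆ E (C j) := by
  induction j using Fin.cases with
  | zero =>
    rw [ghat, Fin.cons_zero, one_smul]
    exact fun x hx => (mem_xzero_iff.mp hx).1
  | succ i =>
    rw [ghat, Fin.cons_succ]
    rintro y hy
    obtain ⟨x, hx, rfl⟩ := Set.mem_smul_set.mp hy
    have h1 := (mem_xzero_iff.mp hx).2 i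
    simpa [smul_eq_mul] using h1

lemma slice_union (hE : IsPartition E) (j : Fin (n + 1)) (i : Fin m) :
    (⋃ Cs : {C : {C : Fin (n + 1) → Fin m // IsConfig g E C} // C.1 j = i},
      ghat g j • xzero g E Cs.1.1) = E i := by
  apply Set.Subset.antisymm
  · intro y hy
    rw [Set.mem_iUnion] at hy
    obtain ⟨Cs, hy⟩ := hy
    have h1 := smul_xzero_subset (g := g) (E := E) (C := Cs.1.1) j hy
    rwa [Cs.2] at h1
  · intro y hy
    obtain ⟨C, hC, hmem⟩ := exists_xzero_mem hE ((ghat g j)⁻¹ * y)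
    have hy2 : y ∈ ghat g j • xzero g E C := by
      rw [Set.mem_smul_set_iff_inv_smul_mem, smul_eq_mul]
      exact hmem
    have hCj : C j = i := eqIdx hE (smul_xzero_subset j hy2) hy
    rw [Set.mem_iUnion]
    exact ⟨⟨⟨C, hC⟩, hCj⟩, hy2⟩

lemma xzero_iUnion (hE : IsPartition E) :
    (⋃ C : {C : Fin (n + 1) → Fin m // IsConfig g E C}, xzero g E C.1) = Set.univ := by
  rw [Set.eq_univ_iff_forall]
  intro x
  obtain ⟨C, hC, hmem⟩ := exists_xzero_mem hE x
  exact Set.mem_iUnion.mpr ⟨⟨C, hC⟩, hmem⟩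

lemma xj_subset_iff (hE : IsPartition E) {C : Fin (n + 1) → Fin m} (hC : IsConfig g E C)
    (j : Fin (n + 1)) (i : Fin m) : xj g E C j ⊆ E i ↔ C j = i := by
  constructor
  · intro hsub
    obtain ⟨x, hx1, hx2⟩ := hC
    have hx : x ∈ xzero g E C := mem_xzero_iff.mpr ⟨hx1, hx2⟩
    have h1 : ghat g j • x ∈ xj g E C j := Set.smul_mem_smul_set hx
    exact eqIdx hE (smul_xzero_subset j h1) (hsub h1)
  · rintro rfl
    exact smul_xzero_subset j

end ConfigAux

end PaperStmt

namespace PaperStmt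

/-- **Main theorem.** If some subsystem of the system of configuration equations `Eq(g, E)`
(encoded by the (0,1)-matrices `V`, `W` given by a list of triples `(iT t, jT t, kT t)`,
with `∑_t (W_t - V_t)` strictly positive) is normal, then `G` is not amenable and `G`
admits a paradoxical decomposition. -/
theorem normal_subsystem_paradoxical {G : Type*} [Group G] {n m : ℕ}
    (g : Fin n → G) (E : Fin m → Set G) (hE : IsPartition E)
    (p : ℕ) (iT : Fin p → Fin m) (jT kT : Fin p → Fin (n + 1))
    (V W : Matrix (Fin p) {C : Fin (n + 1) → Fin m // IsConfig g E C} ℝ)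
    (hV : ∀ t C, V t C = ind (xj g E C.1 (kT t) ⊆ E (iT t)))
    (hW : ∀ t C, W t C = ind (xj g E C.1 (jT t) ⊆ E (iT t)))
    (hpos : ∀ C, 0 < ∑ t, (W t C - V t C))
    (hnorm : IsNormal V W) :
    ¬ HasLeftInvariantMean G ∧ IsParadoxical G := by
  classical
  obtain ⟨σ, hσ⟩ := hnorm
  -- integer (0,1)-matrices underlying V and W
  set aZ : Fin p → {C : Fin (n + 1) → Fin m // IsConfig g E C} → ℤ :=
    fun t C => if C.1 (kT t) = iT t then 1 else 0 with haZ
  set bZ : Fin p → {C : Fin (n + 1) → Fin m // IsConfig g E C} → ℤ :=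
    fun t C => if C.1 (jT t) = iT t then 1 else 0 with hbZ
  have hVZ : ∀ t C, V t C = ((aZ t C : ℤ) : ℝ) := by
    intro t C
    rw [hV]
    have hiff := xj_subset_iff hE C.2 (kT t) (iT t)
    by_cases hc : C.1 (kT t) = iT t
    · have : xj g E C.1 (kT t) ⊆ E (iT t) := hiff.mpr hc
      simp [ind, this, haZ, hc]
    · have : ¬ (xj g E C.1 (kT t) ⊆ E (iT t)) := fun hh => hc (hiff.mp hh)
      simp [ind, this, haZ, hc]
  have hWZ : ∀ t C, W t C = ((bZ t C : ℤ) : ℝ) := by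
    intro t C
    rw [hW]
    have hiff := xj_subset_iff hE C.2 (jT t) (iT t)
    by_cases hc : C.1 (jT t) = iT t
    · have : xj g E C.1 (jT t) ⊆ E (iT t) := hiff.mpr hc
      simp [ind, this, hbZ, hc]
    · have : ¬ (xj g E C.1 (jT t) ⊆ E (iT t)) := fun hh => hc (hiff.mp hh)
      simp [ind, this, hbZ, hc]
  have haZ01 : ∀ t C, aZ t C = 0 ∨ aZ t C = 1 := by
    intro t C
    simp only [haZ]
    split_ifs <;> simp
  -- the normality condition, in integer form
  have hperm : ∀ (M : Matrix (Fin p) {C : Fin (n + 1) → Fin m // IsConfig g E C} ℝ)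
      (r : Fin p) (c : {C : Fin (n + 1) → Fin m // IsConfig g E C}),
      (permMat σ * M) r c = M (σ r) c := by
    intro M r c
    rw [Matrix.mul_apply]
    rw [Finset.sum_eq_single (σ r)]
    · simp [permMat]
    · intro b _ hb
      have : ¬ (σ r = b) := fun hh => hb hh.symm
      simp [permMat, this]
    · intro hh
      exact absurd (Finset.mem_univ _) hh
  have hnormZ : ∀ (i : Fin p) (C : {C : Fin (n + 1) → Fin m // IsConfig g E C}),
      (-1 : ℤ) ≤ (∑ k : Fin p, if (k : ℕ) ≤ (i : ℕ) then bZ (σ k) C - aZ (σ k) C else 0)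
        - aZ (σ (cycSucc i)) C := by
    intro i C
    obtain ⟨z, hz, hz1⟩ := hσ i C
    have e1 : (shiftRows (permMat σ) * V) i C = V (σ (cycSucc i)) C := by
      rw [Matrix.mul_apply]
      rw [Finset.sum_eq_single (σ (cycSucc i))]
      · simp [shiftRows, permMat]
      · intro b _ hb
        have : ¬ (σ (cycSucc i) = b) := fun hh => hb hh.symm
        simp [shiftRows, permMat, this]
      · intro hh
        exact absurd (Finset.mem_univ _) hh
    have e3 : (Tmat p * (permMat σ * (W - V))) i C
        = ∑ k : Fin p, if (k : ℕ) ≤ (i : ℕ) then W (σ k) C - V (σ k) C else 0 := by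
      rw [Matrix.mul_apply]
      refine Finset.sum_congr rfl fun k _ => ?_
      rw [hperm, Matrix.sub_apply]
      show (if k ≤ i then (1 : ℝ) else 0) * _ = _
      by_cases hk : (k : ℕ) ≤ (i : ℕ)
      · rw [if_pos (Fin.le_def.mpr hk), if_pos hk, one_mul]
      · rw [if_neg (fun hh => hk (Fin.le_def.mp hh)), if_neg hk, zero_mul]
    have e4 : ((Tmat p * (permMat σ * (W - V)) - shiftRows (permMat σ) * V) i C)
        = ((((∑ k : Fin p, if (k : ℕ) ≤ (i : ℕ) then bZ (σ k) C - aZ (σ k) C else 0)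
            - aZ (σ (cycSucc i)) C : ℤ) : ℝ)) := by
      rw [Matrix.sub_apply, e3, e1]
      have e5 : ∀ k : Fin p, (if (k : ℕ) ≤ (i : ℕ) then W (σ k) C - V (σ k) C else 0)
          = (((if (k : ℕ) ≤ (i : ℕ) then bZ (σ k) C - aZ (σ k) C else 0 : ℤ)) : ℝ) := by
        intro k
        split_ifs with hk
        · rw [hWZ, hVZ]
          push_cast
          ring
        · simp
      rw [Finset.sum_congr rfl fun k _ => e5 k, hVZ]
      push_cast
      ring
    rw [e4] at hz
    have hint : ((∑ k : Fin p, if (k : ℕ) ≤ (i : ℕ) then bZ (σ k) C - aZ (σ k) C else 0)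
        - aZ (σ (cycSucc i)) C) = z := by exact_mod_cast hz
    rw [hint]
    exact hz1
  -- partial sums of the permuted rows
  set D : ℕ → {C : Fin (n + 1) → Fin m // IsConfig g E C} → ℤ :=
    fun s C => if hs : s < p then bZ (σ ⟨s, hs⟩) C - aZ (σ ⟨s, hs⟩) C else 0 with hD
  set NS : ℕ → {C : Fin (n + 1) → Fin m // IsConfig g E C} → ℤ :=
    fun s C => ∑ u ∈ Finset.range s, D u C with hNS
  have hpartial : ∀ (s : ℕ), s < p → ∀ (C : {C : Fin (n + 1) → Fin m // IsConfig g E C}),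
      (∑ k : Fin p, if (k : ℕ) ≤ s then bZ (σ k) C - aZ (σ k) C else 0) = NS (s + 1) C := by
    intro s hs C
    have h1 : ∀ k : Fin p, (if (k : ℕ) ≤ s then bZ (σ k) C - aZ (σ k) C else 0)
        = (fun u : ℕ => if u < s + 1 then D u C else 0) (k : ℕ) := by
      intro k
      simp only [hD]
      by_cases hk : (k : ℕ) ≤ s
      · rw [if_pos hk, if_pos (Nat.lt_succ_of_le hk), dif_pos k.isLt, Fin.eta]
      · rw [if_neg hk, if_neg (fun hh => hk (Nat.lt_succ_iff.mp hh))]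
    calc (∑ k : Fin p, if (k : ℕ) ≤ s then bZ (σ k) C - aZ (σ k) C else 0)
        = ∑ k : Fin p, (fun u : ℕ => if u < s + 1 then D u C else 0) (k : ℕ) :=
          Finset.sum_congr rfl (fun k _ => h1 k)
      _ = ∑ u ∈ Finset.range p, (if u < s + 1 then D u C else 0) :=
          Fin.sum_univ_eq_sum_range (fun u : ℕ => if u < s + 1 then D u C else 0) p
      _ = ∑ u ∈ Finset.range (s + 1), (if u < s + 1 then D u C else 0) :=
          (Finset.sum_subset (Finset.range_subset_range.mpr (Nat.succ_le_of_lt hs))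
            (fun x _ hx => if_neg (by simpa using hx))).symm
      _ = ∑ u ∈ Finset.range (s + 1), D u C :=
          Finset.sum_congr rfl (fun x hx => if_pos (Finset.mem_range.mp hx))
      _ = NS (s + 1) C := rfl
  have hK1 : ∀ (s : ℕ) (hs : s < p) (C : {C : Fin (n + 1) → Fin m // IsConfig g E C}),
      aZ (σ ⟨s, hs⟩) C ≤ 1 + NS s C := by
    intro s hs C
    rcases s with _ | s'
    · have h0 : NS 0 C = 0 := by simp [hNS]
      rw [h0]
      rcases haZ01 (σ ⟨0, hs⟩) C with h | h <;> rw [h] <;> norm_num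
    · have hs' : s' < p := Nat.lt_of_succ_lt hs
      have h1 := hnormZ ⟨s', hs'⟩ C
      have hcyc : cycSucc (⟨s', hs'⟩ : Fin p) = ⟨s' + 1, hs⟩ := by
        simp [cycSucc, Nat.mod_eq_of_lt hs]
      rw [hcyc] at h1
      rw [hpartial s' hs' C] at h1
      linarith
  have hK2 : ∀ C : {C : Fin (n + 1) → Fin m // IsConfig g E C}, 1 ≤ NS p C := by
    intro C
    have h0 : NS p C = ∑ t : Fin p, (bZ t C - aZ t C) := by
      have h1 : NS p C = ∑ u ∈ Finset.range p, (fun u : ℕ => D u C) u := rfl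
      rw [h1, ← Fin.sum_univ_eq_sum_range (fun u => D u C) p,
        ← Equiv.sum_comp σ (fun t => bZ t C - aZ t C)]
      refine Finset.sum_congr rfl fun k _ => ?_
      simp only [hD]
      rw [dif_pos k.isLt, Fin.eta]
    have heq : ∑ t : Fin p, (W t C - V t C) = ((∑ t : Fin p, (bZ t C - aZ t C) : ℤ) : ℝ) := by
      push_cast
      refine Finset.sum_congr rfl fun t _ => ?_
      rw [hVZ, hWZ]
    have hcast : (0 : ℝ) < ((∑ t : Fin p, (bZ t C - aZ t C) : ℤ) : ℝ) := by
      rw [← heq]; exact hpos C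
    have h2 : (0 : ℤ) < ∑ t : Fin p, (bZ t C - aZ t C) := by exact_mod_cast hcast
    rw [h0]
    omega
  -- counting helper
  have cardPred : ∀ (pred : {C : Fin (n + 1) → Fin m // IsConfig g E C} → Prop)
      (C : {C : Fin (n + 1) → Fin m // IsConfig g E C}),
      (Nat.card {Cs : {C' : {C : Fin (n + 1) → Fin m // IsConfig g E C} // pred C'} // Cs.1 = C} : ℤ)
        = (if pred C then 1 else 0) := by
    intro pred C
    by_cases h : pred C
    · rw [if_pos h]
      haveI : Unique {Cs : {C' : {C : Fin (n + 1) → Fin m // IsConfig g E C} // pred C'} // Cs.1 = C} :=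
        ⟨⟨⟨⟨C, h⟩, rfl⟩⟩, fun x => Subtype.ext (Subtype.ext x.2)⟩
      rw [Nat.card_unique]
      norm_num
    · rw [if_neg h]
      haveI : IsEmpty {Cs : {C' : {C : Fin (n + 1) → Fin m // IsConfig g E C} // pred C'} // Cs.1 = C} :=
        ⟨fun x => h (x.2 ▸ x.1.2)⟩
      rw [Nat.card_of_isEmpty]
      norm_num
  -- the main inductive construction of disjoint copies of the pieces
  have main : ∀ s : ℕ, s ≤ p →
      ∃ (ι : Type) (_ : Finite ι) (lab : ι → {C : Fin (n + 1) → Fin m // IsConfig g E C})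
        (Y : ι → Set G),
        (∀ r r', r ≠ r' → Disjoint (Y r) (Y r')) ∧
        (∀ r, Equi (xzero g E (lab r).1) (Y r)) ∧
        (∀ C : {C : Fin (n + 1) → Fin m // IsConfig g E C},
          1 + NS s C ≤ (Nat.card {r : ι // lab r = C} : ℤ)) := by
    intro s
    induction s with
    | zero =>
      intro _
      refine ⟨{C : Fin (n + 1) → Fin m // IsConfig g E C}, inferInstance, id,
        fun C => xzero g E C.1, ?_, ?_, ?_⟩
      · intro r r' hne
        exact xzero_disjoint hE (fun hh => hne (Subtype.ext hh))
      · intro r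
        exact equi_refl _
      · intro C
        have h0 : NS 0 C = 0 := by simp [hNS]
        rw [h0]
        haveI : Unique {r : {C : Fin (n + 1) → Fin m // IsConfig g E C} // id r = C} :=
          ⟨⟨⟨C, rfl⟩⟩, fun x => Subtype.ext x.2⟩
        rw [Nat.card_unique]
        norm_num
    | succ s ih =>
      intro hs1
      have hs : s < p := hs1
      obtain ⟨ι, instι, lab, Y, hdisj, hequi, hcard⟩ := ih (le_of_lt hs)
      haveI := instι
      set t0 : Fin p := σ ⟨s, hs⟩ with ht0
      -- pick one copy of each piece consumed by row t0
      have hpickex : ∀ Ck : {C : {C : Fin (n + 1) → Fin m // IsConfig g E C} //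
          C.1 (kT t0) = iT t0}, ∃ r : ι, lab r = Ck.1 := by
        intro Ck
        have h4 : aZ t0 Ck.1 = 1 := by simp [haZ, Ck.2]
        have h1 : (1 : ℤ) ≤ (Nat.card {r : ι // lab r = Ck.1} : ℤ) := by
          have h2 := hcard Ck.1
          have h3 := hK1 s hs Ck.1
          rw [← ht0, h4] at h3
          linarith
        have h5' : 1 ≤ Nat.card {r : ι // lab r = Ck.1} := by exact_mod_cast h1
        have h5 : 0 < Nat.card {r : ι // lab r = Ck.1} := h5'
        obtain ⟨r, hr⟩ := (Nat.card_pos_iff.mp h5).1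
        exact ⟨r, hr⟩
      choose pickF hpickF using hpickex
      have hpickinj : Function.Injective pickF := by
        intro a b hab
        apply Subtype.ext
        rw [← hpickF a, ← hpickF b, hab]
      -- glue the consumed copies into a copy of E (iT t0)
      have hglueK : Equi (E (iT t0)) (⋃ a, Y (pickF a)) := by
        have h1 := equi_glue
          (fun a : {C : {C : Fin (n + 1) → Fin m // IsConfig g E C} //
            C.1 (kT t0) = iT t0} => ghat g (kT t0) • xzero g E a.1.1)
          (fun a => Y (pickF a))
          (fun a b hab => disjoint_smul_set
            (xzero_disjoint hE (fun hh => hab (Subtype.ext (Subtype.ext hh)))))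
          (fun a b hab => hdisj _ _ (fun hh => hab (hpickinj hh)))
          (fun a => by
            have h := hequi (pickF a)
            rw [hpickF a] at h
            exact equi_trans (equi_smul_left _ _) h)
        rwa [slice_union hE] at h1
      -- cut that copy along the pieces produced by row t0
      obtain ⟨T, hTdisj, hTunion, hTequi0⟩ := equi_partition hglueK
        (fun a : {C : {C : Fin (n + 1) → Fin m // IsConfig g E C} //
          C.1 (jT t0) = iT t0} => ghat g (jT t0) • xzero g E a.1.1)
        (fun a b hab => disjoint_smul_set
          (xzero_disjoint hE (fun hh => hab (Subtype.ext (Subtype.ext hh)))))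
        (slice_union hE (jT t0) (iT t0))
      have hTequi : ∀ a : {C : {C : Fin (n + 1) → Fin m // IsConfig g E C} //
          C.1 (jT t0) = iT t0}, Equi (xzero g E a.1.1) (T a) :=
        fun a => equi_trans (equi_smul_right _ _) (hTequi0 a)
      -- assemble the new family
      refine ⟨{r : ι // ∀ a, pickF a ≠ r} ⊕ {C : {C : Fin (n + 1) → Fin m // IsConfig g E C} //
          C.1 (jT t0) = iT t0}, inferInstance,
        Sum.elim (fun r => lab r.1) (fun a => a.1),
        Sum.elim (fun r => Y r.1) T, ?_, ?_, ?_⟩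
      · rintro (r | a) (r' | a') hne
        · exact hdisj _ _ (fun hh => hne (by rw [Subtype.ext hh]))
        · have hsub : T a' ⊆ ⋃ b, Y (pickF b) := by
            rw [← hTunion]
            exact Set.subset_iUnion T a'
          refine Disjoint.mono_right hsub ?_
          rw [Set.disjoint_iUnion_right]
          exact fun b => hdisj _ _ (Ne.symm (r.2 b))
        · have hsub : T a ⊆ ⋃ b, Y (pickF b) := by
            rw [← hTunion]
            exact Set.subset_iUnion T a
          refine Disjoint.mono_left hsub ?_
          rw [Set.disjoint_iUnion_left]
          exact fun b => hdisj _ _ (r'.2 b)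
        · exact hTdisj _ _ (fun hh => hne (by rw [hh]))
      · rintro (r | a)
        · exact hequi r.1
        · exact hTequi a
      · intro C
        -- counting
        set newFib := {x : {r : ι // ∀ a, pickF a ≠ r} ⊕
          {C' : {C : Fin (n + 1) → Fin m // IsConfig g E C} // C'.1 (jT t0) = iT t0} //
          Sum.elim (fun r => lab r.1) (fun a => a.1) x = C} with hnewFib
        set oldFib := {r : ι // lab r = C} with holdFib
        set part1 := {x : {r : ι // lab r = C} // ∀ a, pickF a ≠ x.1} with hpart1
        set part2 := {x : {r : ι // lab r = C} // ¬ ∀ a, pickF a ≠ x.1} with hpart2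
        set fibK := {a : {C' : {C : Fin (n + 1) → Fin m // IsConfig g E C} //
          C'.1 (kT t0) = iT t0} // a.1 = C} with hfibK
        set fibJ := {a : {C' : {C : Fin (n + 1) → Fin m // IsConfig g E C} //
          C'.1 (jT t0) = iT t0} // a.1 = C} with hfibJ
        -- (1) card newFib ≥ card part1 + card fibJ
        have hinj1 : ∃ f : part1 ⊕ fibJ → newFib, Function.Injective f := by
          refine ⟨Sum.elim (fun x => ⟨Sum.inl ⟨x.1.1, x.2⟩, x.1.2⟩)
            (fun a => ⟨Sum.inr a.1, a.2⟩), ?_⟩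
          rintro (x | a) (y | b) hxy
          · have h1 : (Sum.inl ⟨x.1.1, x.2⟩ : {r : ι // ∀ a, pickF a ≠ r} ⊕ _)
                = Sum.inl ⟨y.1.1, y.2⟩ := congrArg Subtype.val hxy
            have h2 : (⟨x.1.1, x.2⟩ : {r : ι // ∀ a, pickF a ≠ r}) = ⟨y.1.1, y.2⟩ :=
              Sum.inl.inj h1
            have h3 : x.1.1 = y.1.1 := by injection h2
            exact congrArg Sum.inl (Subtype.ext (Subtype.ext h3))
          · exact absurd (congrArg Subtype.val hxy) (by simp)
          · exact absurd (congrArg Subtype.val hxy) (by simp)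
          · have h1 : (Sum.inr a.1 : {r : ι // ∀ a, pickF a ≠ r} ⊕ _)
                = Sum.inr b.1 := congrArg Subtype.val hxy
            exact congrArg Sum.inr (Subtype.ext (Sum.inr.inj h1))
        obtain ⟨f1, hf1⟩ := hinj1
        have hle1 : Nat.card part1 + Nat.card fibJ ≤ Nat.card newFib := by
          have := Nat.card_le_card_of_injective f1 hf1
          rwa [Nat.card_sum] at this
        -- (2) card oldFib = card part1 + card part2
        have heq2 : Nat.card oldFib = Nat.card part1 + Nat.card part2 := by
          rw [← Nat.card_sum]
          exact (Nat.card_congr (Equiv.sumCompl (fun x : oldFib => ∀ a, pickF a ≠ x.1))).symm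
        -- (3) card part2 ≤ card fibK
        have hle3 : Nat.card part2 ≤ Nat.card fibK := by
          have hsel : ∀ x : part2, ∃ a, pickF a = x.1.1 := by
            intro x
            have h1 := x.2
            push_neg at h1
            exact h1
          choose χ hχ using hsel
          have hχC : ∀ x, (χ x).1 = C := by
            intro x
            rw [← hpickF (χ x), hχ x]
            exact x.1.2
          refine Nat.card_le_card_of_injective (fun x => (⟨χ x, hχC x⟩ : fibK)) ?_
          intro x y hxy
          have h1 : χ x = χ y := congrArg Subtype.val hxy
          have h2 : x.1.1 = y.1.1 := by rw [← hχ x, ← hχ y, h1]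
          exact Subtype.ext (Subtype.ext h2)
        -- (4) the cards of fibK and fibJ
        have h4K : (Nat.card fibK : ℤ) = aZ t0 C := by
          rw [hfibK, cardPred (fun C' => C'.1 (kT t0) = iT t0) C]
          simp [haZ]
        have h4J : (Nat.card fibJ : ℤ) = bZ t0 C := by
          rw [hfibJ, cardPred (fun C' => C'.1 (jT t0) = iT t0) C]
          simp [hbZ]
        -- (5) glue the inequalities together
        have h5 := hcard C
        have hNSstep : NS (s + 1) C = NS s C + (bZ t0 C - aZ t0 C) := by
          have h6 : NS (s + 1) C = NS s C + D s C := Finset.sum_range_succ _ s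
          rw [h6]
          simp only [hD]
          rw [dif_pos hs]
        rw [hNSstep]
        have hc1 : (Nat.card part1 : ℤ) + (Nat.card fibJ : ℤ) ≤ (Nat.card newFib : ℤ) := by
          exact_mod_cast hle1
        have hc2 : (Nat.card oldFib : ℤ) = (Nat.card part1 : ℤ) + (Nat.card part2 : ℤ) := by
          exact_mod_cast heq2
        have hc3 : (Nat.card part2 : ℤ) ≤ (Nat.card fibK : ℤ) := by exact_mod_cast hle3
        have : 1 + (NS s C + (bZ t0 C - aZ t0 C)) ≤
            (Nat.card part1 : ℤ) + (Nat.card fibJ : ℤ) := by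
          rw [← h4J, ← h4K] at *
          linarith
        exact le_trans this hc1
  -- extract two disjoint copies of every piece
  obtain ⟨ι, instι, lab, Y, hdisj, hequi, hcard⟩ := main p le_rfl
  haveI := instι
  have h2card : ∀ C : {C : Fin (n + 1) → Fin m // IsConfig g E C},
      ∃ r1 r2 : ι, r1 ≠ r2 ∧ lab r1 = C ∧ lab r2 = C := by
    intro C
    have h1 : (2 : ℤ) ≤ (Nat.card {r : ι // lab r = C} : ℤ) := by
      have := hcard C
      have := hK2 C
      linarith
    have h2 : 1 < Nat.card {r : ι // lab r = C} := by exact_mod_cast h1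
    haveI h3 : Nontrivial {r : ι // lab r = C} := Finite.one_lt_card_iff_nontrivial.mp h2
    obtain ⟨x, y, hxy⟩ := h3
    exact ⟨x.1, y.1, fun hh => hxy (Subtype.ext hh), x.2, y.2⟩
  choose r1 r2 hr12 hr1 hr2 using h2card
  have hr1inj : ∀ a b, r1 a = r1 b → a = b := by
    intro a b hab
    rw [← hr1 a, ← hr1 b, hab]
  have hr2inj : ∀ a b, r2 a = r2 b → a = b := by
    intro a b hab
    rw [← hr2 a, ← hr2 b, hab]
  have hr12' : ∀ a b, r1 a ≠ r2 b := by
    intro a b hab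
    have h1 : a = b := by rw [← hr1 a, ← hr2 b, hab]
    subst h1
    exact hr12 a hab
  have hpar : IsParadoxical G := by
    apply isParadoxical_of_equi
      (A := ⋃ C : {C : Fin (n + 1) → Fin m // IsConfig g E C}, Y (r1 C))
      (B := ⋃ C : {C : Fin (n + 1) → Fin m // IsConfig g E C}, Y (r2 C))
    · have h1 := equi_glue
        (fun C : {C : Fin (n + 1) → Fin m // IsConfig g E C} => xzero g E C.1)
        (fun C => Y (r1 C))
        (fun a b hab => xzero_disjoint hE (fun hh => hab (Subtype.ext hh)))
        (fun a b hab => hdisj _ _ (fun hh => hab (hr1inj a b hh)))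
        (fun a => by
          have h := hequi (r1 a)
          rwa [hr1 a] at h)
      rwa [xzero_iUnion hE] at h1
    · have h1 := equi_glue
        (fun C : {C : Fin (n + 1) → Fin m // IsConfig g E C} => xzero g E C.1)
        (fun C => Y (r2 C))
        (fun a b hab => xzero_disjoint hE (fun hh => hab (Subtype.ext hh)))
        (fun a b hab => hdisj _ _ (fun hh => hab (hr2inj a b hh)))
        (fun a => by
          have h := hequi (r2 a)
          rwa [hr2 a] at h)
      rwa [xzero_iUnion hE] at h1
    · rw [Set.disjoint_iUnion_left]
      intro a
      rw [Set.disjoint_iUnion_right]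
      intro b
      exact hdisj _ _ (hr12' a b)
  exact ⟨not_mean_of_paradoxical hpar, hpar⟩

end PaperStmt
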